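/- Let 𝓛 ⊆ ℝ^d be a full-rank lattice with fundamental domain Γ, let ħ > 0, q, p ∈ ℝ^d, and let ψ : ℝ^d → ℂ be measurable, 𝓛-periodic with ∫_Γ |ψ| < ∞. Then the function y ↦ conj(|q,p⟩(y)) ψ(y) is integrable on ℝ^d and ∫_{ℝ^d} conj(|q,p⟩(y)) ψ(y) dy = ∫_Γ conj(Σ_{ℓ ∈ 𝓛} |q,p⟩(y + ℓ)) ψ(y) dy, where |q,p⟩(y) = (πħ)^{−d/4} exp(−|y − q|²/(2ħ)) exp(i p·y/ħ). -/

import Mathlib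

open MeasureTheory

noncomputable section

/-- A set `L ⊆ ℝ^d` is a full-rank lattice if it is the ℤ-span of an ℝ-basis. -/
def IsFullRankLattice {d : ℕ} (L : Set (EuclideanSpace ℝ (Fin d))) : Prop :=
  ∃ a : Module.Basis (Fin d) ℝ (EuclideanSpace ℝ (Fin d)),
    L = {z | ∃ n : Fin d → ℤ, z = ∑ i, (n i : ℝ) • a i}

/-- `Γ` is a measurable fundamental domain for the lattice `L`: almost every point of
`ℝ^d` has a unique translate by `L` lying in `Γ`. -/
def IsFundDomain {d : ℕ} (L Γ : Set (EuclideanSpace ℝ (Fin d))) : Prop :=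
  MeasurableSet Γ ∧
    ∀ᵐ x : EuclideanSpace ℝ (Fin d) ∂volume, ∃! ℓ, ℓ ∈ L ∧ x - ℓ ∈ Γ

/-- The Schrödinger coherent state
`|q,p⟩(y) = (πħ)^(−d/4) exp(−|y − q|²/(2ħ)) exp(i p·y/ħ)`. -/
def coherentState (d : ℕ) (hbar : ℝ) (q p y : EuclideanSpace ℝ (Fin d)) : ℂ :=
  (((Real.pi * hbar) ^ (-(d : ℝ) / 4) : ℝ) : ℂ) *
    Complex.exp (((-‖y - q‖ ^ 2 / (2 * hbar) : ℝ)) : ℂ) *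
    Complex.exp (Complex.I * ((inner ℝ p y : ℝ) : ℂ) / (hbar : ℂ))

namespace CSUnfoldAux

open Submodule Pointwise
open scoped ENNReal NNReal

lemma key_ineq {hbar c1 R S t : ℝ} (hhbar : 0 < hbar) (hc1 : 0 < c1)
    (hS : 0 ≤ S) (ht : 0 ≤ t) (h : c1 * S - R ≤ t) :
    -t^2 / (2*hbar) ≤ (R/c1 + hbar/(2*c1^2)) - S := by
  have e1 : R/c1 * c1 = R := div_mul_cancel₀ _ (ne_of_gt hc1)
  have e2 : hbar/(2*c1^2) * (2*c1^2) = hbar := div_mul_cancel₀ _ (by positivity)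
  have e3 : -t^2/(2*hbar) * (2*hbar) = -t^2 := div_mul_cancel₀ _ (by positivity)
  nlinarith [sq_nonneg (c1*t - hbar), mul_pos hhbar hc1, mul_pos (mul_pos hhbar hc1) hc1,
    sq_nonneg c1, sq_nonneg t, mul_pos hhbar hhbar]

lemma summable_exp_neg_abs_int : Summable (fun k : ℤ => Real.exp (-|(k : ℝ)|)) := by
  apply Summable.of_nat_of_neg
  · exact Real.summable_exp_neg_nat.congr (by intro n; simp)
  · exact Real.summable_exp_neg_nat.congr (by intro n; simp)

lemma summable_exp_neg_sum_abs (d : ℕ) :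
    Summable (fun n : Fin d → ℤ => Real.exp (-∑ i, |(n i : ℝ)|)) := by
  induction d with
  | zero => exact .of_finite
  | succ d ih =>
    have h2 := summable_exp_neg_abs_int.mul_of_nonneg ih
      (fun k => (Real.exp_pos _).le) (fun n => (Real.exp_pos _).le)
    refine ((Equiv.summable_iff (Fin.consEquiv (fun _ : Fin (d+1) => ℤ)).symm).2 h2).congr
      (fun n => ?_)
    simp [Function.comp, Fin.sum_univ_succ, neg_add, Real.exp_add, Fin.tail, mul_comm]

variable {d : ℕ}

lemma norm_coherentState (hbar : ℝ) (hhbar : 0 < hbar) (q p z : EuclideanSpace ℝ (Fin d)) :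
    ‖coherentState d hbar q p z‖ =
      (Real.pi * hbar) ^ (-(d : ℝ) / 4) * Real.exp (-‖z - q‖ ^ 2 / (2 * hbar)) := by
  have hπ : (0:ℝ) < Real.pi * hbar := mul_pos Real.pi_pos hhbar
  rw [coherentState, norm_mul, norm_mul]
  rw [Complex.norm_exp, Complex.norm_exp]
  have h1 : (Complex.I * ((inner ℝ p z : ℝ) : ℂ) / (hbar : ℂ)).re = 0 := by
    simp [Complex.div_re, Complex.mul_re]
  rw [h1, Complex.ofReal_re]
  simp [Complex.norm_real, Real.norm_eq_abs, abs_of_pos (Real.rpow_pos_of_pos hπ _)]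

lemma continuous_coherentState (hbar : ℝ) (q p : EuclideanSpace ℝ (Fin d)) :
    Continuous (coherentState d hbar q p) := by
  have h1 : Continuous fun y : EuclideanSpace ℝ (Fin d) =>
      ((-‖y - q‖ ^ 2 / (2 * hbar) : ℝ) : ℂ) := by
    apply Complex.continuous_ofReal.comp
    fun_prop
  have h2 : Continuous fun y : EuclideanSpace ℝ (Fin d) =>
      Complex.I * ((inner ℝ p y : ℝ) : ℂ) / (hbar : ℂ) := by
    apply Continuous.div_const
    apply Continuous.mul continuous_const
    apply Complex.continuous_ofReal.comp
    exact Continuous.inner continuous_const continuous_id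
  exact ((continuous_const.mul (Complex.continuous_exp.comp h1)).mul
    (Complex.continuous_exp.comp h2))

lemma exists_coord_bound (a : Module.Basis (Fin d) ℝ (EuclideanSpace ℝ (Fin d))) :
    ∃ c1 : ℝ, 0 < c1 ∧ ∀ n : Fin d → ℤ,
      c1 * (∑ i, |(n i : ℝ)|) ≤ ‖∑ i, (n i : ℝ) • a i‖ := by
  set T := LinearMap.toContinuousLinearMap
    (a.equivFun : EuclideanSpace ℝ (Fin d) →ₗ[ℝ] (Fin d → ℝ)) with hT
  set M : ℝ := ‖T‖ + 1 with hM
  have hM0 : 0 < M := by positivity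
  refine ⟨((d : ℝ) * M + 1)⁻¹, by positivity, fun n => ?_⟩
  set z := ∑ i, (n i : ℝ) • a i with hz
  have hzc : ∀ i, T z i = (n i : ℝ) := by
    intro i
    have h0 : T z i = a.repr z i := by simp [hT, Module.Basis.equivFun_apply]
    rw [h0, hz]
    exact congrFun (a.repr_sum_self fun i => (n i : ℝ)) i
  have h1 : ∀ i, |(n i : ℝ)| ≤ ‖T z‖ := by
    intro i
    rw [← hzc i]
    exact norm_le_pi_norm (T z) i
  have h2 : (∑ i, |(n i : ℝ)|) ≤ (d : ℝ) * ‖T z‖ := by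
    calc (∑ i, |(n i : ℝ)|) ≤ ∑ _i : Fin d, ‖T z‖ := Finset.sum_le_sum (fun i _ => h1 i)
    _ = (d : ℝ) * ‖T z‖ := by simp [mul_comm]
  have h3 : ‖T z‖ ≤ M * ‖z‖ := by
    refine le_trans (T.le_opNorm z) ?_
    have := norm_nonneg z
    nlinarith
  have h4 : (∑ i, |(n i : ℝ)|) ≤ ((d : ℝ) * M + 1) * ‖z‖ := by
    have hd0 : (0:ℝ) ≤ (d : ℝ) := Nat.cast_nonneg d
    nlinarith [norm_nonneg z, norm_nonneg (T z)]
  rw [inv_mul_le_iff₀ (by positivity)]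
  linarith

lemma mem_lattice (a : Module.Basis (Fin d) ℝ (EuclideanSpace ℝ (Fin d))) (n : Fin d → ℤ) :
    (∑ i, (n i : ℝ) • a i) ∈ span ℤ (Set.range ⇑a) := by
  refine Submodule.sum_mem _ (fun i _ => ?_)
  rw [Int.cast_smul_eq_zsmul]
  exact Submodule.smul_mem _ (n i) (Submodule.subset_span ⟨i, rfl⟩)

def latticeEquiv (a : Module.Basis (Fin d) ℝ (EuclideanSpace ℝ (Fin d))) :
    (Fin d → ℤ) ≃ span ℤ (Set.range ⇑a) :=
  Equiv.ofBijective (fun n => ⟨∑ i, (n i : ℝ) • a i, mem_lattice a n⟩) <| by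
    constructor
    · intro n m h
      have h2 : (fun i => ((n i : ℝ))) = (fun i => ((m i : ℝ))) := by
        have := congrArg (fun x : span ℤ (Set.range ⇑a) => ⇑(a.repr ↑x)) h
        simpa only [a.repr_sum_self] using this
      funext i
      exact_mod_cast congrFun h2 i
    · rintro ⟨x, hx⟩
      rw [mem_span_range_iff_exists_fun] at hx
      obtain ⟨c, hc⟩ := hx
      refine ⟨c, ?_⟩
      apply Subtype.ext
      simp only
      rw [← hc]
      exact Finset.sum_congr rfl (fun i _ => Int.cast_smul_eq_zsmul ℝ (c i) (a i))

@[simp] lemma latticeEquiv_coe (a : Module.Basis (Fin d) ℝ (EuclideanSpace ℝ (Fin d)))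
    (n : Fin d → ℤ) : (latticeEquiv a n : EuclideanSpace ℝ (Fin d)) = ∑ i, (n i : ℝ) • a i := rfl

lemma tsum_comp_addRight_int {d : ℕ} (f : (Fin d → ℤ) → ℝ) (c : Fin d → ℤ) :
    ∑' n, f (n + c) = ∑' n, f n := (Equiv.addRight c).tsum_eq f

lemma summable_comp_addRight_int {d : ℕ} {f : (Fin d → ℤ) → ℝ} (hf : Summable f)
    (c : Fin d → ℤ) : Summable (fun n => f (n + c)) :=
  (Equiv.summable_iff (Equiv.addRight c)).2 hf

lemma lat_sum_add (a : Module.Basis (Fin d) ℝ (EuclideanSpace ℝ (Fin d))) (n m : Fin d → ℤ) :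
    (∑ i, ((n + m) i : ℝ) • a i)
      = (∑ i, (n i : ℝ) • a i) + (∑ i, (m i : ℝ) • a i) := by
  rw [← Finset.sum_add_distrib]
  refine Finset.sum_congr rfl (fun i _ => ?_)
  have : ((n + m) i : ℝ) = (n i : ℝ) + (m i : ℝ) := by push_cast; simp
  rw [this, add_smul]

set_option maxHeartbeats 1000000 in
lemma periodized_bound (hbar : ℝ) (hhbar : 0 < hbar)
    (a : Module.Basis (Fin d) ℝ (EuclideanSpace ℝ (Fin d))) (q p : EuclideanSpace ℝ (Fin d)) :
    ∃ C : ℝ, ∀ y : EuclideanSpace ℝ (Fin d),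
      Summable (fun g : span ℤ (Set.range ⇑a) =>
        ‖coherentState d hbar q p (↑g + y)‖) ∧
      ∑' g : span ℤ (Set.range ⇑a), ‖coherentState d hbar q p (↑g + y)‖ ≤ C := by
  obtain ⟨c1, hc1, hcb⟩ := exists_coord_bound a
  obtain ⟨R0, hR0⟩ := isBounded_iff_forall_norm_le.1 (ZSpan.fundamentalDomain_isBounded a)
  set R0' := max R0 0 with hR0'
  set Cd := (Real.pi * hbar) ^ (-(d:ℝ)/4) with hCd
  have hCd0 : 0 ≤ Cd := (Real.rpow_pos_of_pos (mul_pos Real.pi_pos hhbar) _).le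
  set R := R0' + ‖q‖ with hR
  have hRpos : 0 ≤ R := by
    have : (0:ℝ) ≤ R0' := le_max_right _ _
    positivity
  set B := R / c1 + hbar / (2 * c1^2) with hB
  set maj : (Fin d → ℤ) → ℝ := fun n => Cd * Real.exp B * Real.exp (-∑ i, |(n i:ℝ)|) with hmaj
  have hmaj_summ : Summable maj := (summable_exp_neg_sum_abs d).mul_left _
  set C := Cd * Real.exp B * (∑' n : Fin d → ℤ, Real.exp (-∑ i, |(n i:ℝ)|)) with hC
  have hbdd : ∀ y0 : EuclideanSpace ℝ (Fin d), ‖y0‖ ≤ R0' → ∀ n : Fin d → ℤ,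
      ‖coherentState d hbar q p ((∑ i, (n i : ℝ) • a i) + y0)‖ ≤ maj n := by
    intro y0 hy0 n
    rw [norm_coherentState hbar hhbar]
    set S := ∑ i, |(n i : ℝ)| with hS
    have hS0 : 0 ≤ S := Finset.sum_nonneg fun i _ => abs_nonneg _
    set t := ‖((∑ i, (n i : ℝ) • a i) + y0) - q‖ with ht
    have ht0 : 0 ≤ t := norm_nonneg _
    have hlow : c1 * S - R ≤ t := by
      have h1 : c1 * S ≤ ‖∑ i, (n i : ℝ) • a i‖ := hcb n
      have h2 : ‖∑ i, (n i : ℝ) • a i‖ - ‖y0 - q‖ ≤ t := by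
        set u := ∑ i, (n i : ℝ) • a i with hu
        set v := y0 - q with hv
        have heq : (u + y0) - q = u + v := by rw [hv]; abel
        rw [ht, heq]
        have h3 : ‖u‖ = ‖(u + v) - v‖ := by congr 1; abel
        rw [h3]
        have := norm_sub_le (u + v) v
        linarith
      have h3 : ‖y0 - q‖ ≤ R :=
        le_trans (norm_sub_le _ _) (by rw [hR]; exact add_le_add_left hy0 _)
      linarith
    have hkey := key_ineq (R := R) hhbar hc1 hS0 ht0 hlow
    calc Cd * Real.exp (-t^2/(2*hbar)) ≤ Cd * Real.exp (B - S) := by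
          apply mul_le_mul_of_nonneg_left (Real.exp_le_exp.2 ?_) hCd0
          rw [hB]; linarith
    _ = maj n := by rw [hmaj]; simp only [hS]; rw [sub_eq_add_neg, Real.exp_add, mul_assoc]
  have main : ∀ y : EuclideanSpace ℝ (Fin d),
      Summable (fun n : Fin d → ℤ =>
        ‖coherentState d hbar q p ((∑ i, (n i : ℝ) • a i) + y)‖) ∧
      ∑' n : Fin d → ℤ,
        ‖coherentState d hbar q p ((∑ i, (n i : ℝ) • a i) + y)‖ ≤ C := by
    intro y
    obtain ⟨y0, hy0, m0, rfl⟩ : ∃ y0 : EuclideanSpace ℝ (Fin d), ‖y0‖ ≤ R0' ∧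
        ∃ m0 : Fin d → ℤ, y = y0 + ∑ i, (m0 i : ℝ) • a i := by
      refine ⟨ZSpan.fract a y,
        le_trans (hR0 _ (ZSpan.fract_mem_fundamentalDomain a y)) (le_max_left _ _),
        (latticeEquiv a).symm (ZSpan.floor a y), ?_⟩
      have h1 : (latticeEquiv a ((latticeEquiv a).symm (ZSpan.floor a y))
          : EuclideanSpace ℝ (Fin d)) = ↑(ZSpan.floor a y) := by
        rw [Equiv.apply_symm_apply]
      have h2 : (∑ i, (((latticeEquiv a).symm (ZSpan.floor a y)) i : ℝ) • a i)
          = ((ZSpan.floor a y : span ℤ (Set.range ⇑a)) : EuclideanSpace ℝ (Fin d)) := h1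
      rw [ZSpan.fract_apply, h2]
      abel
    set F : (Fin d → ℤ) → ℝ :=
      fun n => ‖coherentState d hbar q p ((∑ i, (n i : ℝ) • a i) + y0)‖ with hF
    have hFsum : Summable F :=
      Summable.of_nonneg_of_le (fun n => norm_nonneg _) (fun n => hbdd y0 hy0 n) hmaj_summ
    have hFtsum : ∑' n, F n ≤ C := by
      calc ∑' n, F n ≤ ∑' n, maj n := Summable.tsum_le_tsum (fun n => hbdd y0 hy0 n) hFsum hmaj_summ
      _ = C := by rw [hC, hmaj]; exact tsum_mul_left
    have hptwise : ∀ n : Fin d → ℤ,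
        ‖coherentState d hbar q p ((∑ i, (n i : ℝ) • a i) + (y0 + ∑ i, (m0 i : ℝ) • a i))‖
          = F (n + m0) := by
      intro n
      rw [hF]
      simp only
      rw [lat_sum_add]
      congr 2
      abel
    constructor
    · exact (summable_comp_addRight_int hFsum m0).congr (fun n => (hptwise n).symm)
    · calc ∑' n : Fin d → ℤ,
            ‖coherentState d hbar q p ((∑ i, (n i : ℝ) • a i) + (y0 + ∑ i, (m0 i : ℝ) • a i))‖
          = ∑' n, F (n + m0) := tsum_congr hptwise
      _ = ∑' n, F n := tsum_comp_addRight_int F m0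
      _ ≤ C := hFtsum
  refine ⟨C, fun y => ?_⟩
  constructor
  · rw [← Equiv.summable_iff (latticeEquiv a)]
    exact (main y).1
  · rw [← Equiv.tsum_eq (latticeEquiv a)]
    exact (main y).2

set_option maxHeartbeats 1000000 in
theorem coherent_state_unfolding_aux
    {d : ℕ} (hbar : ℝ) (hhbar : 0 < hbar)
    (L : Set (EuclideanSpace ℝ (Fin d))) (hL : IsFullRankLattice L)
    (Γ : Set (EuclideanSpace ℝ (Fin d))) (hΓ : IsFundDomain L Γ)
    (q p : EuclideanSpace ℝ (Fin d))
    (ψ : EuclideanSpace ℝ (Fin d) → ℂ) (hψmeas : Measurable ψ)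
    (hψper : ∀ y : EuclideanSpace ℝ (Fin d), ∀ ℓ ∈ L, ψ (y + ℓ) = ψ y)
    (hψL1 : IntegrableOn ψ Γ volume) :
    Integrable (fun y : EuclideanSpace ℝ (Fin d) =>
        (starRingEnd ℂ) (coherentState d hbar q p y) * ψ y) volume ∧
    ∫ y : EuclideanSpace ℝ (Fin d), (starRingEnd ℂ) (coherentState d hbar q p y) * ψ y
      = ∫ y in Γ,
          (starRingEnd ℂ)
            (∑' ℓ : L, coherentState d hbar q p (y + (ℓ : EuclideanSpace ℝ (Fin d)))) *
          ψ y := by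
  classical
  obtain ⟨a, hLa⟩ := hL
  have hset : L = ((span ℤ (Set.range ⇑a) : Submodule ℤ (EuclideanSpace ℝ (Fin d)))
      : Set (EuclideanSpace ℝ (Fin d))) := by
    rw [hLa]
    ext z
    simp only [Set.mem_setOf_eq, SetLike.mem_coe]
    constructor
    · rintro ⟨n, rfl⟩; exact mem_lattice a n
    · intro hz
      rw [mem_span_range_iff_exists_fun] at hz
      obtain ⟨n, hn⟩ := hz
      refine ⟨n, ?_⟩
      rw [← hn]
      exact (Finset.sum_congr rfl (fun i _ => (Int.cast_smul_eq_zsmul ℝ (n i) (a i)))).symm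
  rw [hset] at hψper hΓ ⊢
  clear hLa hset
  set Λ := span ℤ (Set.range ⇑a) with hΛ
  haveI : Countable ↥Λ := Countable.of_equiv _ (latticeEquiv a)
  haveI : MeasurableVAdd ↥Λ (EuclideanSpace ℝ (Fin d)) := by
    refine { measurable_const_vadd := fun g => ?_, measurable_vadd_const := fun x => ?_ }
    · exact measurable_const_add _
    · exact measurable_subtype_coe.add_const x
  haveI : VAddInvariantMeasure ↥Λ (EuclideanSpace ℝ (Fin d)) volume :=
    ⟨fun g s _ => measure_preimage_add volume (↑g) s⟩
  set c := coherentState d hbar q p with hcdef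
  have hccont : Continuous c := continuous_coherentState hbar q p
  have hconjc : Continuous fun z : ℂ => (starRingEnd ℂ) z := continuous_star
  -- fundamental domain
  have hFD : IsAddFundamentalDomain ↥Λ Γ volume := by
    refine ⟨hΓ.1.nullMeasurableSet, ?_, ?_⟩
    · filter_upwards [hΓ.2] with x hx
      obtain ⟨ℓ, ⟨hℓL, hℓΓ⟩, _⟩ := hx
      refine ⟨⟨-ℓ, neg_mem hℓL⟩, ?_⟩
      show -ℓ + x ∈ Γ
      rw [neg_add_eq_sub]
      exact hℓΓ
    · intro g g' hne
      have hsub : ((g +ᵥ Γ) ∩ (g' +ᵥ Γ) : Set (EuclideanSpace ℝ (Fin d))) ⊆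
          {x | ¬ ∃! ℓ, ℓ ∈ (Λ : Set (EuclideanSpace ℝ (Fin d))) ∧ x - ℓ ∈ Γ} := by
        rintro x ⟨hx1, hx2⟩ hu
        rw [Set.mem_vadd_set_iff_neg_vadd_mem] at hx1 hx2
        have e1 : x - (g : EuclideanSpace ℝ (Fin d)) ∈ Γ := by
          have : ((-g : ↥Λ) : EuclideanSpace ℝ (Fin d)) + x ∈ Γ := hx1
          rwa [NegMemClass.coe_neg, neg_add_eq_sub] at this
        have e2 : x - (g' : EuclideanSpace ℝ (Fin d)) ∈ Γ := by
          have : ((-g' : ↥Λ) : EuclideanSpace ℝ (Fin d)) + x ∈ Γ := hx2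
          rwa [NegMemClass.coe_neg, neg_add_eq_sub] at this
        have := hu.unique ⟨g.2, e1⟩ ⟨g'.2, e2⟩
        exact hne (Subtype.ext this)
      exact measure_mono_null hsub (ae_iff.1 hΓ.2)
  -- periodicity of ψ
  have hψ' : ∀ (g : ↥Λ) (y : EuclideanSpace ℝ (Fin d)), ψ ((g : EuclideanSpace ℝ (Fin d)) + y) = ψ y := by
    intro g y
    rw [add_comm]
    exact hψper y ↑g g.2
  obtain ⟨C, hC⟩ := periodized_bound hbar hhbar a q p
  -- nnnorm identity
  have hnormf : ∀ (g : ↥Λ) (y : EuclideanSpace ℝ (Fin d)),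
      (‖(starRingEnd ℂ) (c (↑g + y)) * ψ (↑g + y)‖₊ : ℝ≥0∞)
        = (‖c ((g : EuclideanSpace ℝ (Fin d)) + y)‖₊ : ℝ≥0∞) * ‖ψ y‖₊ := by
    intro g y
    rw [nnnorm_mul, starRingEnd_apply, nnnorm_star, hψ' g y, ENNReal.coe_mul]
  have hkey : ∀ y : EuclideanSpace ℝ (Fin d),
      (∑' g : ↥Λ, (‖c ((g : EuclideanSpace ℝ (Fin d)) + y)‖₊ : ℝ≥0∞)) ≤ ENNReal.ofReal C := by
    intro y
    calc ∑' g : ↥Λ, (‖c ((g : EuclideanSpace ℝ (Fin d)) + y)‖₊ : ℝ≥0∞)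
        = ∑' g : ↥Λ, ENNReal.ofReal ‖c ((g : EuclideanSpace ℝ (Fin d)) + y)‖ := by
          refine tsum_congr fun g => ?_
          rw [ofReal_norm, enorm_eq_nnnorm]
    _ = ENNReal.ofReal (∑' g : ↥Λ, ‖c ((g : EuclideanSpace ℝ (Fin d)) + y)‖) :=
          (ENNReal.ofReal_tsum_of_nonneg (fun _ => norm_nonneg _) (hC y).1).symm
    _ ≤ ENNReal.ofReal C := ENNReal.ofReal_le_ofReal (hC y).2
  have hterm_meas : ∀ g : ↥Λ, Measurable fun y : EuclideanSpace ℝ (Fin d) =>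
      (‖c ((g : EuclideanSpace ℝ (Fin d)) + y)‖₊ : ℝ≥0∞) * ‖ψ y‖₊ := by
    intro g
    exact (((hccont.comp (continuous_const.add continuous_id)).measurable.nnnorm).coe_nnreal_ennreal).mul
      (hψmeas.nnnorm.coe_nnreal_ennreal)
  have hfin : ∑' g : ↥Λ, ∫⁻ y in Γ, (‖c ((g : EuclideanSpace ℝ (Fin d)) + y)‖₊ : ℝ≥0∞) * ‖ψ y‖₊ ∂volume < ⊤ := by
    rw [← lintegral_tsum (fun g => (hterm_meas g).aemeasurable)]
    calc ∫⁻ y in Γ, ∑' g : ↥Λ, (‖c ((g : EuclideanSpace ℝ (Fin d)) + y)‖₊ : ℝ≥0∞) * ‖ψ y‖₊ ∂volume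
        ≤ ∫⁻ y in Γ, ENNReal.ofReal C * ‖ψ y‖₊ ∂volume := by
          refine lintegral_mono fun y => ?_
          rw [ENNReal.tsum_mul_right]
          exact mul_le_mul_left (hkey y) _
    _ = ENNReal.ofReal C * ∫⁻ y in Γ, ‖ψ y‖₊ ∂volume :=
          lintegral_const_mul' _ _ ENNReal.ofReal_ne_top
    _ < ⊤ := ENNReal.mul_lt_top ENNReal.ofReal_lt_top hψL1.2
  -- integrability
  have hint : Integrable (fun y : EuclideanSpace ℝ (Fin d) => (starRingEnd ℂ) (c y) * ψ y) volume := by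
    refine ⟨((hconjc.comp hccont).aestronglyMeasurable).mul hψmeas.aestronglyMeasurable, ?_⟩
    show ∫⁻ y, ‖(starRingEnd ℂ) (c y) * ψ y‖₊ ∂volume < ⊤
    calc ∫⁻ y, ‖(starRingEnd ℂ) (c y) * ψ y‖₊ ∂volume
        = ∑' g : ↥Λ, ∫⁻ y in Γ, ‖(starRingEnd ℂ) (c (g +ᵥ y)) * ψ (g +ᵥ y)‖₊ ∂volume :=
          hFD.lintegral_eq_tsum'' _
    _ = ∑' g : ↥Λ, ∫⁻ y in Γ, (‖c ((g : EuclideanSpace ℝ (Fin d)) + y)‖₊ : ℝ≥0∞) * ‖ψ y‖₊ ∂volume := by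
          refine tsum_congr fun g => ?_
          refine lintegral_congr fun y => ?_
          exact hnormf g y
    _ < ⊤ := hfin
  refine ⟨hint, ?_⟩
  -- the equality
  have hstep1 : ∫ y, (starRingEnd ℂ) (c y) * ψ y
      = ∑' g : ↥Λ, ∫ y in Γ, (starRingEnd ℂ) (c (g +ᵥ y)) * ψ (g +ᵥ y) :=
    hFD.integral_eq_tsum'' _ hint
  have hptw : ∀ (g : ↥Λ) (y : EuclideanSpace ℝ (Fin d)),
      (starRingEnd ℂ) (c ((g : EuclideanSpace ℝ (Fin d)) + y)) * ψ ((g : EuclideanSpace ℝ (Fin d)) + y)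
        = (starRingEnd ℂ) (c (y + (g : EuclideanSpace ℝ (Fin d)))) * ψ y := by
    intro g y
    rw [hψ' g y, add_comm (g : EuclideanSpace ℝ (Fin d)) y]
  have hmeas2 : ∀ g : ↥Λ, AEStronglyMeasurable
      (fun y : EuclideanSpace ℝ (Fin d) => (starRingEnd ℂ) (c (y + (g : EuclideanSpace ℝ (Fin d)))) * ψ y)
      (volume.restrict Γ) := by
    intro g
    exact (((hconjc.comp (hccont.comp (continuous_id.add continuous_const))).aestronglyMeasurable).mul
      hψmeas.aestronglyMeasurable)
  have hfin2 : ∑' g : ↥Λ, ∫⁻ y in Γ,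
      ‖(starRingEnd ℂ) (c (y + (g : EuclideanSpace ℝ (Fin d)))) * ψ y‖₊ ∂volume ≠ ⊤ := by
    refine ne_of_lt (lt_of_eq_of_lt ?_ hfin)
    refine tsum_congr fun g => lintegral_congr fun y => ?_
    rw [nnnorm_mul, starRingEnd_apply, nnnorm_star, add_comm y (g : EuclideanSpace ℝ (Fin d)), ENNReal.coe_mul]
  have hswap := integral_tsum hmeas2 hfin2
  rw [hstep1]
  rw [show (∑' g : ↥Λ, ∫ y in Γ, (starRingEnd ℂ) (c (g +ᵥ y)) * ψ (g +ᵥ y))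
      = ∑' g : ↥Λ, ∫ y in Γ, (starRingEnd ℂ) (c (y + (g : EuclideanSpace ℝ (Fin d)))) * ψ y from
    tsum_congr fun g => integral_congr_ae (Filter.Eventually.of_forall fun y => hptw g y)]
  rw [← hswap]
  refine integral_congr_ae (Filter.Eventually.of_forall fun y => ?_)
  show (∑' g : ↥Λ, (starRingEnd ℂ) (c (y + (g : EuclideanSpace ℝ (Fin d)))) * ψ y)
      = (starRingEnd ℂ) (∑' ℓ : ↥(Λ : Set (EuclideanSpace ℝ (Fin d))),
          c (y + (ℓ : EuclideanSpace ℝ (Fin d)))) * ψ y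
  rw [starRingEnd_apply, tsum_star, ← tsum_mul_right]
  rfl

end CSUnfoldAux

/-- Unfolding identity: the full-space inner product `⟨q,p | ψ⟩_{L²(ℝ^d)}` equals the
unit-cell inner product of the `L`-periodized coherent state against `ψ`. -/
theorem coherent_state_unfolding
    {d : ℕ} (hbar : ℝ) (hhbar : 0 < hbar)
    (L : Set (EuclideanSpace ℝ (Fin d))) (hL : IsFullRankLattice L)
    (Γ : Set (EuclideanSpace ℝ (Fin d))) (hΓ : IsFundDomain L Γ)
    (q p : EuclideanSpace ℝ (Fin d))
    (ψ : EuclideanSpace ℝ (Fin d) → ℂ) (hψmeas : Measurable ψ)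
    (hψper : ∀ y : EuclideanSpace ℝ (Fin d), ∀ ℓ ∈ L, ψ (y + ℓ) = ψ y)
    (hψL1 : IntegrableOn ψ Γ volume) :
    Integrable (fun y : EuclideanSpace ℝ (Fin d) =>
        (starRingEnd ℂ) (coherentState d hbar q p y) * ψ y) volume ∧
    ∫ y : EuclideanSpace ℝ (Fin d), (starRingEnd ℂ) (coherentState d hbar q p y) * ψ y
      = ∫ y in Γ,
          (starRingEnd ℂ)
            (∑' ℓ : L, coherentState d hbar q p (y + (ℓ : EuclideanSpace ℝ (Fin d)))) *
          ψ y :=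
  CSUnfoldAux.coherent_state_unfolding_aux hbar hhbar L hL Γ hΓ q p ψ hψmeas hψper hψL1
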